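/- arXiv:math/0503330 — 3 statements merged into one kernel-verified Lean document; each statement's English description precedes it below -/
import Mathlib

section
/- Every connected vertex-transitive finite simple graph with an even number of vertices has a perfect matching. -/
open Function

namespace VTPM

variable {V : Type*} [Fintype V]

/-- A partial matching of `G`, encoded as an involution whose non-fixed points are
matched to adjacent vertices. Fixed points are the uncovered vertices. -/
def Good (G : SimpleGraph V) (f : V → V) : Prop :=
  Involutive f ∧ ∀ x, f x ≠ x → G.Adj x (f x)

/-- Number of uncovered vertices. -/
noncomputable def fixc (f : V → V) : ℕ := Set.ncard {x | f x = x}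

lemma good_id (G : SimpleGraph V) : Good G (id : V → V) :=
  ⟨fun _ => rfl, fun x hx => absurd rfl hx⟩

lemma even_card_invol (f : V → V) (hf : Involutive f) (s : Finset V)
    (hmem : ∀ x ∈ s, f x ∈ s) (hne : ∀ x ∈ s, f x ≠ x) : Even s.card := by
  classical
  induction s using Finset.strongInduction with
  | _ s ih =>
    rcases s.eq_empty_or_nonempty with rfl | ⟨x, hx⟩
    · simp
    · have hfx : f x ∈ s := hmem x hx
      have hxx : f x ≠ x := hne x hx
      have hpair : ({x, f x} : Finset V) ⊆ s := by
        intro y hy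
        simp only [Finset.mem_insert, Finset.mem_singleton] at hy
        rcases hy with rfl | rfl <;> assumption
      have hss : s \ {x, f x} ⊂ s := by
        apply Finset.sdiff_ssubset hpair
        simp
      have hmem' : ∀ y ∈ s \ {x, f x}, f y ∈ s \ {x, f x} := by
        intro y hy
        simp only [Finset.mem_sdiff, Finset.mem_insert, Finset.mem_singleton] at hy ⊢
        push_neg at hy ⊢
        have hys := hy.1
        have hyx := hy.2.1
        have hyfx := hy.2.2
        refine ⟨hmem y hys, ?_, ?_⟩
        · intro h; apply hyfx; rw [← h, hf y]
        · intro h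
          have := hf.injective h
          exact hyx this
      have heven := ih _ hss hmem' (fun y hy => hne y (Finset.mem_sdiff.mp hy).1)
      have hpc : ({x, f x} : Finset V).card = 2 := by
        rw [Finset.card_pair (Ne.symm hxx)]
      have hcs := Finset.card_sdiff_of_subset hpair
      rw [Nat.even_iff] at heven ⊢
      have hle := Finset.card_le_card hpair
      omega

lemma even_fixc {f : V → V} (hf : Involutive f) (heven : Even (Fintype.card V)) :
    Even (fixc f) := by
  classical
  have hcompl : {x : V | f x = x}ᶜ = {x : V | f x ≠ x} := by ext x; simp
  have hsplit : fixc f + Set.ncard {x : V | f x ≠ x} = Fintype.card V := by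
    rw [fixc, ← hcompl, Set.ncard_add_ncard_compl, Nat.card_eq_fintype_card]
  have hev2 : Even (Set.ncard {x : V | f x ≠ x}) := by
    have h1 : Set.ncard {x : V | f x ≠ x} = {x : V | f x ≠ x}.toFinset.card := by
      rw [Set.ncard_eq_toFinset_card']
    rw [h1]
    apply even_card_invol f hf
    · intro x hx
      simp only [Set.mem_toFinset, Set.mem_setOf_eq] at hx ⊢
      rw [hf x]; exact fun h => hx h.symm
    · intro x hx
      simpa using hx
  rw [Nat.even_iff] at heven hev2 ⊢
  omega

lemma transport {G : SimpleGraph V} {f : V → V} (hf : Good G f) (φ : G ≃g G) :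
    Good G (fun x => φ (f (φ.symm x))) ∧ fixc (fun x => φ (f (φ.symm x))) = fixc f ∧
    ∀ u, f u = u → φ (f (φ.symm (φ u))) = φ u := by
  constructor
  · constructor
    · intro x
      simp only
      rw [φ.symm_apply_apply, hf.1]
      exact φ.apply_symm_apply x
    · intro x hx
      simp only at hx ⊢
      have h1 : f (φ.symm x) ≠ φ.symm x := by
        intro h; apply hx; rw [h]; exact φ.apply_symm_apply x
      have h2 := hf.2 _ h1
      have h3 : G.Adj (φ (φ.symm x)) (φ (f (φ.symm x))) := φ.map_adj_iff.mpr h2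
      rwa [φ.apply_symm_apply] at h3
  constructor
  · have himg : {x : V | φ (f (φ.symm x)) = x} = (φ : V → V) '' {x : V | f x = x} := by
      ext x
      simp only [Set.mem_setOf_eq, Set.mem_image]
      constructor
      · intro h
        refine ⟨φ.symm x, ?_, ?_⟩
        · have : φ.symm (φ (f (φ.symm x))) = φ.symm x := by rw [h]
          rwa [φ.symm_apply_apply] at this
        · exact φ.apply_symm_apply x
      · rintro ⟨y, hy, rfl⟩
        rw [φ.symm_apply_apply, hy]
    rw [fixc, fixc, himg, Set.ncard_image_of_injective _ (RelIso.injective φ)]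
  · intro u hu
    rw [φ.symm_apply_apply, hu]

/-- Alternating path argument: given matchings `f`, `g` where `f` covers `w` but `g`
misses `w`, either `g` can be augmented (covering `w` and everything it covered), or
`f` can be modified into a matching of the same size that covers some `f`-missed
vertex `y` and misses `w` instead. -/
lemma alternating {G : SimpleGraph V} {f g : V → V} (hf : Good G f) (hg : Good G g)
    {w : V} (hfw : f w ≠ w) (hgw : g w = w) :
    (∃ g' : V → V, Good G g' ∧ (∀ x, g' x = x → g x = x) ∧ g' w ≠ w) ∨
    (∃ f' : V → V, ∃ y : V, Good G f' ∧ f y = y ∧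
      {x | f' x = x} = insert w ({x | f x = x} \ {y})) := by
  classical
  set F : ℕ → V → V := fun k => if Even k then f else g with hFdef
  set a : ℕ → V := fun k => Nat.rec w (fun k x => F k x) k with hadef
  have ha0 : a 0 = w := rfl
  have hastep : ∀ k, a (k + 1) = F k (a k) := fun _ => rfl
  have hFinv : ∀ k, Involutive (F k) := by
    intro k
    by_cases h : Even k <;> simp only [hFdef, h, if_true, if_false]
    · exact hf.1
    · exact hg.1
  have hFcongr : ∀ i j, i % 2 = j % 2 → F i = F j := by
    intro i j hij
    have h : Even i ↔ Even j := by
      rw [Nat.even_iff, Nat.even_iff, hij]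
    by_cases he : Even i
    · simp only [hFdef, he, h.mp he, if_true]
    · simp only [hFdef, if_neg he, if_neg (fun hh => he (h.mpr hh))]
  have hback : ∀ k, F k (a (k + 1)) = a k := by
    intro k
    rw [hastep k]
    exact hFinv k (a k)
  have hFeven : ∀ k, Even k → F k = f := by
    intro k hk; simp only [hFdef, hk, if_true]
  have hFodd : ∀ k, ¬ Even k → F k = g := by
    intro k hk; simp only [hFdef, hk, if_false]
  -- key injectivity
  have key : ∀ J : ℕ, (∀ k, k ≤ J → a (k + 1) ≠ a k) →
      ∀ i j, i ≤ J + 1 → j ≤ J + 1 → a i = a j → i = j := by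
    intro J hns i j hi hj hij
    by_contra hne
    have hP : ∃ n, ∃ m, m < n ∧ n ≤ J + 1 ∧ a m = a n := by
      rcases Nat.lt_or_ge i j with h | h
      · exact ⟨j, i, h, hj, hij⟩
      · exact ⟨i, j, lt_of_le_of_ne h (Ne.symm hne), hi, hij.symm⟩
    obtain ⟨m, hmn, hnJ, hamn⟩ := Nat.find_spec hP
    set n := Nat.find hP with hn
    have hmin : ∀ n', n' < n → ¬ ∃ m, m < n' ∧ n' ≤ J + 1 ∧ a m = a n' :=
      fun n' h => Nat.find_min hP h
    rcases eq_or_lt_of_le (Nat.succ_le_of_lt hmn) with hcase | hcase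
    · -- n = m + 1 : a stops at m, contradiction
      apply hns m (by omega)
      rw [show m + 1 = n from hcase]
      exact hamn.symm
    · -- n ≥ m + 2
      have hn1 : n - 1 + 1 = n := by omega
      have hbn : F (n - 1) (a n) = a (n - 1) := by
        have := hback (n - 1); rwa [hn1] at this
      by_cases hpar : m % 2 = n % 2
      · rcases Nat.eq_zero_or_pos m with rfl | hm
        · -- m = 0, n even ≥ 2
          have hFg : F (n - 1) = g := by
            apply hFodd
            rw [Nat.even_iff]
            omega
          have h1 : a (n - 1) = a 0 := by
            rw [← hbn, hFg, ← hamn, ha0, hgw]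
          exact hmin (n - 1) (by omega) ⟨0, by omega, by omega, h1.symm⟩
        · have hm1 : m - 1 + 1 = m := by omega
          have hbm : F (m - 1) (a m) = a (m - 1) := by
            have := hback (m - 1); rwa [hm1] at this
          have hFeq : F (m - 1) = F (n - 1) := hFcongr _ _ (by omega)
          have h1 : a (m - 1) = a (n - 1) := by
            rw [← hbm, ← hbn, hFeq, hamn]
          exact hmin (n - 1) (by omega) ⟨m - 1, by omega, by omega, h1⟩
      · -- opposite parity, n ≥ m + 3
        have h3 : m + 3 ≤ n := by omega
        have hFeq : F m = F (n - 1) := hFcongr _ _ (by omega)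
        have h1 : a (m + 1) = a (n - 1) := by
          rw [hastep m, hFeq, hamn, hbn]
        exact hmin (n - 1) (by omega) ⟨m + 1, by omega, by omega, h1⟩
  -- a stopping point exists
  have hstopex : ∃ k, a (k + 1) = a k := by
    by_contra hns
    push_neg at hns
    have hinj : Function.Injective fun i : Fin (Fintype.card V + 2) => a i := by
      intro i j hij
      exact Fin.ext (key (Fintype.card V) (fun k _ => hns k) i j
        (Nat.lt_succ_iff.mp i.isLt) (Nat.lt_succ_iff.mp j.isLt) hij)
    have hle := Fintype.card_le_of_injective _ hinj
    simp only [Fintype.card_fin] at hle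
    omega
  set K := Nat.find hstopex with hKdef
  have hK : a (K + 1) = a K := Nat.find_spec hstopex
  have hKmin : ∀ k, k < K → a (k + 1) ≠ a k := fun k hk => Nat.find_min hstopex hk
  have hK1 : 1 ≤ K := by
    rcases Nat.eq_zero_or_pos K with h0 | h
    · exfalso
      rw [h0] at hK
      rw [hastep 0, hFeven 0 (by simp), ha0] at hK
      exact hfw hK
    · exact h
  have hinj : ∀ i j, i ≤ K → j ≤ K → a i = a j → i = j := by
    intro i j hi hj hij
    exact key (K - 1) (fun k hk => hKmin k (by omega)) i j (by omega) (by omega) hij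
  set S : Set V := {x | ∃ k, k ≤ K ∧ a k = x} with hSdef
  have hwS : w ∈ S := ⟨0, by omega, ha0⟩
  -- step values
  have hfeven : ∀ k, Even k → k < K → f (a k) = a (k + 1) := by
    intro k hk hkK
    rw [hastep k, hFeven k hk]
  have hfodd : ∀ k, ¬ Even k → f (a k) = a (k - 1) := by
    intro k hk
    have hk1 : k - 1 + 1 = k := by
      rw [Nat.even_iff] at hk; omega
    have := hback (k - 1)
    rw [hk1, hFeven (k - 1) (by rw [Nat.even_iff] at hk ⊢; omega)] at this
    exact this
  have hgodd : ∀ k, ¬ Even k → k < K → g (a k) = a (k + 1) := by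
    intro k hk hkK
    rw [hastep k, hFodd k hk]
  have hgeven : ∀ k, Even k → 1 ≤ k → g (a k) = a (k - 1) := by
    intro k hk hk1
    have hk2 : k - 1 + 1 = k := by omega
    have := hback (k - 1)
    rw [hk2, hFodd (k - 1) (by rw [Nat.even_iff] at hk ⊢; omega)] at this
    exact this
  -- closure of S under f and g
  have hfS : ∀ x, x ∈ S → f x ∈ S := by
    rintro x ⟨k, hk, rfl⟩
    by_cases he : Even k
    · rcases lt_or_eq_of_le hk with h | rfl
      · exact ⟨k + 1, by omega, (hfeven k he h).symm⟩
      · have hfix : f (a K) = a K := by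
          rw [hastep K, hFeven K he] at hK
          exact hK
        exact ⟨K, le_refl _, hfix.symm⟩
    · exact ⟨k - 1, by omega, (hfodd k he).symm⟩
  have hgS : ∀ x, x ∈ S → g x ∈ S := by
    rintro x ⟨k, hk, rfl⟩
    by_cases he : Even k
    · rcases Nat.eq_zero_or_pos k with rfl | h1
      · rw [ha0, hgw]
        exact hwS
      · exact ⟨k - 1, by omega, (hgeven k he h1).symm⟩
    · rcases lt_or_eq_of_le hk with h | rfl
      · exact ⟨k + 1, by omega, (hgodd k he h).symm⟩
      · have hfix : g (a K) = a K := by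
          rw [hastep K, hFodd K he] at hK
          exact hK
        exact ⟨K, le_refl _, hfix.symm⟩
  by_cases hKe : Even K
  · -- Case A : augmented-swap of f along the path; misses w, covers y = a K
    right
    have hstopf : f (a K) = a K := by
      rw [hastep K, hFeven K hKe] at hK
      exact hK
    have hfnfS : ∀ k, k < K → f (a k) ≠ a k := by
      intro k hkK
      by_cases he : Even k
      · rw [hfeven k he hkK]
        exact hKmin k hkK
      · rw [hfodd k he]
        have h1 : k - 1 + 1 = k := by rw [Nat.even_iff] at he; omega
        intro h
        apply hKmin (k - 1) (by omega)
        rw [h1, h]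
    have hgnfS : ∀ k, 1 ≤ k → k ≤ K → g (a k) ≠ a k := by
      intro k h1 hkK
      by_cases he : Even k
      · rw [hgeven k he h1]
        intro h
        apply hKmin (k - 1) (by omega)
        rw [show k - 1 + 1 = k by omega, h]
      · have hkK' : k < K := by
          rcases lt_or_eq_of_le hkK with h | rfl
          · exact h
          · exact absurd hKe he
        rw [hgodd k he hkK']
        exact hKmin k hkK'
    have hfSn : ∀ x, x ∉ S → f x ∉ S := by
      intro x hx hc
      exact hx (by rw [← hf.1 x]; exact hfS _ hc)
    refine ⟨fun x => if x ∈ S then g x else f x, a K, ?_, hstopf, ?_⟩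
    · constructor
      · intro x
        by_cases hx : x ∈ S
        · simp only [if_pos hx, if_pos (hgS x hx)]
          exact hg.1 x
        · simp only [if_neg hx, if_neg (hfSn x hx)]
          exact hf.1 x
      · intro x hx
        by_cases h : x ∈ S
        · simp only [if_pos h] at hx ⊢
          exact hg.2 x hx
        · simp only [if_neg h] at hx ⊢
          exact hf.2 x hx
    · ext x
      simp only [Set.mem_setOf_eq, Set.mem_insert_iff, Set.mem_diff,
        Set.mem_singleton_iff]
      constructor
      · intro hx
        by_cases h : x ∈ S
        · left
          simp only [if_pos h] at hx
          obtain ⟨k, hk, rfl⟩ := h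
          rcases Nat.eq_zero_or_pos k with rfl | h1
          · exact ha0
          · exact absurd hx (hgnfS k h1 hk)
        · right
          simp only [if_neg h] at hx
          refine ⟨hx, ?_⟩
          intro hxy
          exact h (hxy ▸ ⟨K, le_refl _, rfl⟩)
      · rintro (rfl | ⟨hx, hxy⟩)
        · simp only [if_pos hwS]
          exact hgw
        · have hxS : x ∉ S := by
            rintro ⟨k, hk, rfl⟩
            rcases lt_or_eq_of_le hk with h | rfl
            · exact hfnfS k h hx
            · exact hxy rfl
          simp only [if_neg hxS]
          exact hx
  · -- Case B : augment g along the path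
    left
    have hfnfS : ∀ k, k ≤ K → f (a k) ≠ a k := by
      intro k hkK
      by_cases he : Even k
      · have hkK' : k < K := by
          rcases lt_or_eq_of_le hkK with h | rfl
          · exact h
          · exact absurd he hKe
        rw [hfeven k he hkK']
        exact hKmin k hkK'
      · rw [hfodd k he]
        have h1 : k - 1 + 1 = k := by rw [Nat.even_iff] at he; omega
        intro h
        apply hKmin (k - 1) (by omega)
        rw [h1, h]
    have hgSn : ∀ x, x ∉ S → g x ∉ S := by
      intro x hx hc
      exact hx (by rw [← hg.1 x]; exact hgS _ hc)
    refine ⟨fun x => if x ∈ S then f x else g x, ?_, ?_, ?_⟩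
    · constructor
      · intro x
        by_cases hx : x ∈ S
        · simp only [if_pos hx, if_pos (hfS x hx)]
          exact hf.1 x
        · simp only [if_neg hx, if_neg (hgSn x hx)]
          exact hg.1 x
      · intro x hx
        by_cases h : x ∈ S
        · simp only [if_pos h] at hx ⊢
          exact hf.2 x hx
        · simp only [if_neg h] at hx ⊢
          exact hg.2 x hx
    · intro x hx
      by_cases h : x ∈ S
      · simp only [if_pos h] at hx
        obtain ⟨k, hk, rfl⟩ := h
        exact absurd hx (hfnfS k hk)
      · simp only [if_neg h] at hx
        exact hx
    · simp only [if_pos hwS]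
      exact hfw


end VTPM

open VTPM in
/-- Every connected vertex-transitive finite simple graph with an even
number of vertices has a perfect matching. -/
theorem vertexTransitive_connected_even_has_perfectMatching
    {V : Type*} [Fintype V] (G : SimpleGraph V)
    (hconn : G.Connected)
    (htrans : ∀ u v : V, ∃ φ : G ≃g G, φ u = v)
    (heven : Even (Fintype.card V)) :
    ∃ M : G.Subgraph, M.IsPerfectMatching := by
  classical
  set Sν : Set ℕ := {n | ∃ f : V → V, Good G f ∧ fixc f = n} with hSνdef
  have hSν : Sν.Nonempty := ⟨fixc (id : V → V), id, good_id G, rfl⟩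
  set μ := sInf Sν with hμdef
  obtain ⟨f0, hf0, hf0c⟩ := Nat.sInf_mem hSν
  have hμle : ∀ n ∈ Sν, μ ≤ n := fun n hn => Nat.sInf_le hn
  have hμ0 : μ = 0 := by
    by_contra hμne
    have hμe : Even μ := by
      rw [hμdef, ← hf0c]
      exact even_fixc hf0.1 heven
    have hμ2 : 2 ≤ μ := by rcases hμe with ⟨m, hm⟩; omega
    set D : Set ℕ := {n | ∃ (f : V → V) (u v : V), Good G f ∧ fixc f = μ ∧
        f u = u ∧ f v = v ∧ u ≠ v ∧ G.dist u v = n} with hDdef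
    have hDne : D.Nonempty := by
      have h2 : 1 < Set.ncard {x | f0 x = x} := by
        have : fixc f0 = Set.ncard {x | f0 x = x} := rfl
        omega
      obtain ⟨u, hu, v, hv, huv⟩ := (Set.one_lt_ncard (Set.toFinite _)).mp h2
      exact ⟨_, f0, u, v, hf0, hf0c, hu, hv, huv, rfl⟩
    set d := sInf D with hddef
    obtain ⟨f, u, v, hf, hfc, hfu, hfv, huv, hduv⟩ := Nat.sInf_mem hDne
    rw [← hddef] at hduv
    have hdle : ∀ n ∈ D, d ≤ n := fun n hn => Nat.sInf_le hn
    have hd0 : d ≠ 0 := by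
      intro h
      rw [h] at hduv
      exact Nat.lt_irrefl 0 (hduv ▸ hconn.pos_dist_of_ne huv)
    have hd1 : d ≠ 1 := by
      intro h
      have hadj : G.Adj u v := SimpleGraph.dist_eq_one_iff_adj.mp (h ▸ hduv)
      set f2 : V → V := fun x => if x = u then v else if x = v then u else f x with hf2def
      have hval_u : f2 u = v := by simp [hf2def]
      have hval_v : f2 v = u := by simp [hf2def, Ne.symm huv]
      have hval : ∀ x, x ≠ u → x ≠ v → f2 x = f x := by
        intro x h1 h2; simp [hf2def, h1, h2]
      have hgood : Good G f2 := by
        constructor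
        · intro x
          by_cases h1 : x = u
          · subst h1; rw [hval_u, hval_v]
          · by_cases h2 : x = v
            · subst h2; rw [hval_v, hval_u]
            · rw [hval x h1 h2]
              by_cases h3 : f x = u
              · exfalso; apply h1
                rw [← hf.1 x, h3, hfu]
              · by_cases h4 : f x = v
                · exfalso; apply h2
                  rw [← hf.1 x, h4, hfv]
                · rw [hval _ h3 h4]; exact hf.1 x
        · intro x hx
          by_cases h1 : x = u
          · subst h1; rw [hval_u]; exact hadj
          · by_cases h2 : x = v
            · subst h2; rw [hval_v]; exact hadj.symm
            · rw [hval x h1 h2] at hx ⊢; exact hf.2 x hx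
      have hsubset : {x | f2 x = x} ⊆ {x | f x = x} \ {u} := by
        intro x hx
        simp only [Set.mem_setOf_eq] at hx
        by_cases h1 : x = u
        · exfalso; subst h1; rw [hval_u] at hx; exact huv hx.symm
        · by_cases h2 : x = v
          · exfalso; subst h2; rw [hval_v] at hx; exact huv hx
          · rw [hval x h1 h2] at hx
            exact ⟨hx, h1⟩
      have hle := Set.ncard_le_ncard hsubset (Set.toFinite _)
      have hcard : ({x : V | f x = x} \ {u}).ncard = μ - 1 := by
        have hufix : u ∈ {x : V | f x = x} := hfu
        rw [Set.ncard_diff_singleton_of_mem hufix]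
        have : fixc f = Set.ncard {x | f x = x} := rfl
        omega
      have hlt : fixc f2 < μ := by
        have : fixc f2 = Set.ncard {x | f2 x = x} := rfl
        omega
      exact absurd (hμle _ ⟨f2, hgood, rfl⟩) (by omega)
    have hd2 : 2 ≤ d := by omega
    obtain ⟨p, hp⟩ := SimpleGraph.Connected.exists_walk_length_eq_dist hconn u v
    cases p with
    | nil =>
      rw [SimpleGraph.Walk.length_nil, hduv] at hp
      omega
    | @cons _ w' _ hadj q =>
      rw [SimpleGraph.Walk.length_cons, hduv] at hp
      have hdw : G.dist w' v = d - 1 := by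
        have hle1 : G.dist w' v ≤ d - 1 := by
          have := SimpleGraph.dist_le q
          omega
        have hge : d ≤ 1 + G.dist w' v := by
          have htri := hconn.dist_triangle (u := u) (v := w') (w := v)
          have huw : G.dist u w' ≤ 1 := by
            have := SimpleGraph.dist_le (SimpleGraph.Walk.cons hadj SimpleGraph.Walk.nil)
            simpa using this
          omega
        omega
      have hwu : w' ≠ u := fun h => G.irrefl (h ▸ hadj)
      have hwv : w' ≠ v := by
        intro h
        rw [h, SimpleGraph.dist_self] at hdw
        omega
      have hfw : f w' ≠ w' := by
        intro h
        have hmem : d - 1 ∈ D := ⟨f, w', v, hf, hfc, h, hfv, hwv, hdw⟩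
        have := hdle _ hmem
        omega
      obtain ⟨φ, hφ⟩ := htrans u w'
      obtain ⟨hg, hgc, hgw0⟩ := transport hf φ
      set g : V → V := fun x => φ (f (φ.symm x)) with hgdef
      have hgw : g w' = w' := by rw [← hφ]; exact hgw0 u hfu
      have hgcμ : fixc g = μ := hgc.trans hfc
      have hdu1 : G.dist u w' = 1 := SimpleGraph.dist_eq_one_iff_adj.mpr hadj
      have hgu : g u ≠ u := by
        intro h
        have hmem : (1 : ℕ) ∈ D := ⟨g, u, w', hg, hgcμ, h, hgw, fun hc => hwu hc.symm, hdu1⟩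
        have := hdle _ hmem
        omega
      have hgv : g v ≠ v := by
        intro h
        have hmem : d - 1 ∈ D := ⟨g, w', v, hg, hgcμ, hgw, h, hwv, hdw⟩
        have := hdle _ hmem
        omega
      rcases alternating hf hg hfw hgw with ⟨g', hg', hsub, hg'w⟩ | ⟨f', y, hf', hfy, hfix⟩
      · have hsubset : {x | g' x = x} ⊆ {x | g x = x} \ {w'} := by
          intro x hx
          exact ⟨hsub x hx, fun hc => hg'w (by rw [← hc]; exact hx)⟩
        have hle := Set.ncard_le_ncard hsubset (Set.toFinite _)
        have hw'fix : w' ∈ {x : V | g x = x} := hgw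
        have hcard : ({x : V | g x = x} \ {w'}).ncard = μ - 1 := by
          rw [Set.ncard_diff_singleton_of_mem hw'fix]
          have : fixc g = Set.ncard {x | g x = x} := rfl
          omega
        have hlt : fixc g' < μ := by
          have : fixc g' = Set.ncard {x | g' x = x} := rfl
          omega
        exact absurd (hμle _ ⟨g', hg', rfl⟩) (by omega)
      · have hf'c : fixc f' = μ := by
          have hwnot : w' ∉ {x : V | f x = x} \ {y} := fun hc => hfw hc.1
          have hymem : y ∈ {x : V | f x = x} := hfy
          have h1 : fixc f' = Set.ncard {x | f' x = x} := rfl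
          have h2 : fixc f = Set.ncard {x | f x = x} := rfl
          rw [h1, hfix, Set.ncard_insert_of_notMem hwnot (Set.toFinite _),
            Set.ncard_diff_singleton_of_mem hymem]
          omega
        have hw'' : f' w' = w' := by
          have : w' ∈ insert w' ({x : V | f x = x} \ {y}) := Set.mem_insert _ _
          rw [← hfix] at this
          exact this
        by_cases hyu : y = u
        · have hvy : v ≠ y := fun hc => huv (by rw [← hyu, ← hc])
          have hv' : f' v = v := by
            have : v ∈ insert w' ({x : V | f x = x} \ {y}) :=
              Set.mem_insert_of_mem _ ⟨hfv, hvy⟩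
            rw [← hfix] at this
            exact this
          have hmem : d - 1 ∈ D := ⟨f', w', v, hf', hf'c, hw'', hv', hwv, hdw⟩
          have := hdle _ hmem
          omega
        · have hu' : f' u = u := by
            have : u ∈ insert w' ({x : V | f x = x} \ {y}) :=
              Set.mem_insert_of_mem _ ⟨hfu, fun hc => hyu hc.symm⟩
            rw [← hfix] at this
            exact this
          have hmem : (1 : ℕ) ∈ D :=
            ⟨f', u, w', hf', hf'c, hu', hw'', fun hc => hwu hc.symm, hdu1⟩
          have := hdle _ hmem
          omega
  -- μ = 0 : build the perfect matching
  have hc0 : fixc f0 = 0 := hf0c.trans hμ0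
  have hempty : {x : V | f0 x = x} = ∅ := by
    have h1 : fixc f0 = Set.ncard {x | f0 x = x} := rfl
    rw [h1] at hc0
    exact (Set.ncard_eq_zero (Set.toFinite _)).mp hc0
  have hnf : ∀ x, f0 x ≠ x := fun x hx =>
    Set.eq_empty_iff_forall_notMem.mp hempty x hx
  refine ⟨{ verts := Set.univ,
            Adj := fun x y => f0 x = y,
            adj_sub := ?_,
            edge_vert := fun _ => trivial,
            symm := ?_ }, ?_, fun v => trivial⟩
  · intro x y h
    exact h ▸ hf0.2 x (hnf x)
  · refine ⟨fun x y h => ?_⟩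
    show f0 y = x
    rw [← h, hf0.1]
  · intro x _
    refine ⟨f0 x, rfl, ?_⟩
    intro y hy
    have h : f0 x = y := hy
    exact h.symm
end

section
/- Let G be a finite group of even order and let S ⊆ G be a symmetric subset (S = S⁻¹, 1 ∉ S) that generates G. Then the Cayley graph of G with respect to S has a perfect matching. -/
/-- The Cayley graph of a group `G` with respect to a subset `S`: distinct vertices `v, w`
are adjacent if and only if `v⁻¹ * w ∈ S` or `w⁻¹ * v ∈ S` (for a symmetric set `S` with
`S = S⁻¹` these two conditions agree, recovering the usual definition). -/
def cayleyGraph {G : Type*} [Group G] (S : Set G) : SimpleGraph G where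
  Adj v w := v ≠ w ∧ (v⁻¹ * w ∈ S ∨ w⁻¹ * v ∈ S)
  symm := by
    refine ⟨?_⟩
    intro v w h
    exact ⟨fun hvw => h.1 hvw.symm, h.2.symm⟩
  loopless := ⟨fun v h => h.1 rfl⟩

open Finset SimpleGraph

section MatchFn

variable {V : Type*} {H : SimpleGraph V}

/-- A matching encoded as an involution: `f v = v` means `v` is exposed, otherwise
`v` is matched to `f v`, which must be adjacent to it. -/
def IsMatchFn (H : SimpleGraph V) (f : V → V) : Prop :=
  (∀ v, f (f v) = v) ∧ ∀ v, f v ≠ v → H.Adj v (f v)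

lemma isMatchFn_id : IsMatchFn H id := ⟨fun _ => rfl, fun v hv => absurd rfl hv⟩

lemma glue_matchFn [DecidableEq V] {f g : V → V} (hf : IsMatchFn H f) (hg : IsMatchFn H g)
    (P : Finset V) (hfP : ∀ x ∈ P, f x ∈ P) (hgP : ∀ x ∈ P, g x ∈ P) :
    IsMatchFn H (fun x => if x ∈ P then g x else f x) := by
  constructor
  · intro v
    by_cases hv : v ∈ P
    · simp only [hv, if_true, hgP v hv]
      exact hg.1 v
    · have h1 : f v ∉ P := fun h => hv (by rw [← hf.1 v]; exact hfP _ h)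
      simp only [hv, if_false, h1]
      exact hf.1 v
  · intro v hne
    by_cases hv : v ∈ P
    · simpa [hv] using hg.2 v (by simpa [hv] using hne)
    · simpa [hv] using hf.2 v (by simpa [hv] using hne)

lemma glue_fixset [Fintype V] [DecidableEq V] (f g : V → V) (P : Finset V) :
    univ.filter (fun x => (if x ∈ P then g x else f x) = x)
      = P.filter (fun x => g x = x) ∪ ((univ.filter (fun x => f x = x)) \ P) := by
  ext x
  by_cases hx : x ∈ P <;> simp [hx]

lemma IsMatchFn.even_supp [Fintype V] [DecidableEq V] {f : V → V} (hf : IsMatchFn H f) :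
    Even (univ.filter (fun v => ¬ f v = v)).card := by
  let M : H.Subgraph :=
    { verts := {v | ¬ f v = v}
      Adj := fun v w => f v = w ∧ w ≠ v
      adj_sub := by
        rintro v w ⟨rfl, hne⟩
        exact hf.2 v hne
      edge_vert := by
        rintro v w ⟨rfl, hne⟩
        exact hne
      symm := by
        refine ⟨?_⟩
        rintro v w ⟨rfl, hne⟩
        exact ⟨hf.1 v, Ne.symm hne⟩ }
  have hM : M.IsMatching := by
    rintro v hv
    refine ⟨f v, ⟨rfl, hv⟩, ?_⟩
    rintro y ⟨rfl, -⟩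
    rfl
  haveI : Fintype M.verts := Set.Finite.fintype (Set.toFinite _)
  have h1 := hM.even_card
  have h2 : M.verts.toFinset = univ.filter (fun v => ¬ f v = v) := by
    ext x
    simp [M, Set.mem_toFinset]
  rwa [h2] at h1

/-- Transport of a matching function along a graph automorphism. -/
lemma IsMatchFn.iso [Fintype V] [DecidableEq V] {f : V → V} (hf : IsMatchFn H f) (φ : H ≃g H) :
    IsMatchFn H (fun x => φ (f (φ.symm x))) ∧
      (univ.filter (fun v => ¬ (φ (f (φ.symm v))) = v)).card
        = (univ.filter (fun v => ¬ f v = v)).card := by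
  constructor
  · constructor
    · intro v
      simp [hf.1]
    · intro v hne
      have h1 : f (φ.symm v) ≠ φ.symm v := by
        intro h
        apply hne
        show φ (f (φ.symm v)) = v
        rw [h]
        simp
      have h2 := hf.2 _ h1
      have h3 := φ.map_adj_iff.mpr h2
      simpa using h3
  · apply Finset.card_bij (fun v _ => φ.symm v)
    · intro a ha
      simp only [mem_filter, mem_univ, true_and] at ha ⊢
      intro h
      apply ha
      rw [h]
      simp
    · intro a _ b _ h
      exact φ.symm.injective h
    · intro b hb
      refine ⟨φ b, ?_, by simp⟩
      simp only [mem_filter, mem_univ, true_and] at hb ⊢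
      intro h
      apply hb
      have := congrArg φ.symm h
      simpa using this

end MatchFn

section Core

variable {V : Type*}

lemma exists_alternating_path [Fintype V] [DecidableEq V]
    {f g : V → V} (hf2 : ∀ x, f (f x) = x) (hg2 : ∀ x, g (g x) = x)
    {u : V} (hfu : f u = u) (hgu : g u ≠ u) :
    ∃ (P : Finset V) (z : V), u ∈ P ∧ z ∈ P ∧ z ≠ u ∧
      (∀ x ∈ P, f x ∈ P) ∧ (∀ x ∈ P, g x ∈ P) ∧
      ((P.filter (fun x => f x = x) = {u, z} ∧ P.filter (fun x => g x = x) = ∅) ∨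
       (P.filter (fun x => f x = x) = {u} ∧ P.filter (fun x => g x = x) = {z})) := by
  classical
  set b : ℕ → V := fun n => Nat.rec u (fun m x => if Even m then g x else f x) n with hbdef
  have hb0 : b 0 = u := rfl
  have hbS : ∀ n, b (n + 1) = if Even n then g (b n) else f (b n) := fun n => rfl
  have hbg : ∀ n, n % 2 = 0 → b (n + 1) = g (b n) := fun n h => by
    rw [hbS, if_pos (Nat.even_iff.mpr h)]
  have hbf : ∀ n, n % 2 = 1 → b (n + 1) = f (b n) := fun n h => by
    rw [hbS, if_neg (by rw [Nat.even_iff]; omega)]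
  have hgb : ∀ n, n % 2 = 0 → g (b (n + 1)) = b n := fun n h => by rw [hbg n h, hg2]
  have hfb : ∀ n, n % 2 = 1 → f (b (n + 1)) = b n := fun n h => by rw [hbf n h, hf2]
  -- distinctness of the alternating walk, given no stalls below j
  have key : ∀ j i, i < j → (∀ m, m < j → b (m + 1) ≠ b m) → b i ≠ b j := by
    intro j
    induction j using Nat.strong_induction_on with
    | _ j IH =>
      intro i hij hns heq
      rcases Nat.even_or_odd i with hi | hi <;> rcases Nat.even_or_odd j with hj | hj <;>
        [(rw [Nat.even_iff] at hi; rw [Nat.even_iff] at hj);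
         (rw [Nat.even_iff] at hi; rw [Nat.odd_iff] at hj);
         (rw [Nat.odd_iff] at hi; rw [Nat.even_iff] at hj);
         (rw [Nat.odd_iff] at hi; rw [Nat.odd_iff] at hj)]
      · -- i even, j even
        by_cases hi0 : i = 0
        · subst hi0
          have hj2 : 2 ≤ j := by omega
          have e1 : f (b j) = b (j - 1) := by
            have := hfb (j - 1) (by omega)
            rwa [show j - 1 + 1 = j from by omega] at this
          have e2 : b (j - 1) = b j := by
            have hbj : b j = u := by rw [← heq, hb0]
            rw [← e1, hbj, hfu]
          have := hns (j - 1) (by omega)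
          rw [show j - 1 + 1 = j from by omega] at this
          exact this e2.symm
        · have e1 : f (b i) = b (i - 1) := by
            have := hfb (i - 1) (by omega)
            rwa [show i - 1 + 1 = i from by omega] at this
          have e2 : f (b j) = b (j - 1) := by
            have := hfb (j - 1) (by omega)
            rwa [show j - 1 + 1 = j from by omega] at this
          have e3 : b (i - 1) = b (j - 1) := by rw [← e1, ← e2, heq]
          exact IH (j - 1) (by omega) (i - 1) (by omega)
            (fun m hm => hns m (by omega)) e3
      · -- i even, j odd
        have e1 : b (i + 1) = g (b i) := hbg i (by omega)
        have e2 : g (b j) = b (j - 1) := by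
          have := hgb (j - 1) (by omega)
          rwa [show j - 1 + 1 = j from by omega] at this
        have e3 : b (i + 1) = b (j - 1) := by rw [e1, heq, e2]
        by_cases hij1 : i + 1 = j
        · rw [show j - 1 = i from by omega] at e3
          exact hns i (by omega) e3
        · exact IH (j - 1) (by omega) (i + 1) (by omega)
            (fun m hm => hns m (by omega)) e3
      · -- i odd, j even
        have e1 : b (i + 1) = f (b i) := hbf i (by omega)
        have e2 : f (b j) = b (j - 1) := by
          have := hfb (j - 1) (by omega)
          rwa [show j - 1 + 1 = j from by omega] at this
        have e3 : b (i + 1) = b (j - 1) := by rw [e1, heq, e2]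
        by_cases hij1 : i + 1 = j
        · rw [show j - 1 = i from by omega] at e3
          exact hns i (by omega) e3
        · exact IH (j - 1) (by omega) (i + 1) (by omega)
            (fun m hm => hns m (by omega)) e3
      · -- i odd, j odd
        have e1 : g (b i) = b (i - 1) := by
          have := hgb (i - 1) (by omega)
          rwa [show i - 1 + 1 = i from by omega] at this
        have e2 : g (b j) = b (j - 1) := by
          have := hgb (j - 1) (by omega)
          rwa [show j - 1 + 1 = j from by omega] at this
        have e3 : b (i - 1) = b (j - 1) := by rw [← e1, ← e2, heq]
        exact IH (j - 1) (by omega) (i - 1) (by omega)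
          (fun m hm => hns m (by omega)) e3
  -- there is a stall
  have hstall : ∃ n, b (n + 1) = b n := by
    by_contra hc
    push_neg at hc
    have hinj : Function.Injective b := by
      intro a c hac
      by_contra hne
      rcases Nat.lt_or_ge a c with h | h
      · exact key c a h (fun m _ => hc m) hac
      · exact key a c (by omega) (fun m _ => hc m) hac.symm
    obtain ⟨x, y, hxy, hbxy⟩ := Finite.exists_ne_map_eq_of_infinite b
    exact hxy (hinj hbxy)
  set K := Nat.find hstall with hKdef
  have hK : b (K + 1) = b K := Nat.find_spec hstall
  have hKmin : ∀ m, m < K → b (m + 1) ≠ b m := fun m hm => Nat.find_min hstall hm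
  have hK1 : 1 ≤ K := by
    by_contra h
    have h0 : K = 0 := by omega
    have := hK
    rw [h0, hbg 0 rfl, hb0] at this
    exact hgu this
  have hdist : ∀ i j, i < j → j ≤ K → b i ≠ b j := fun i j hij hjK =>
    key j i hij (fun m hm => hKmin m (by omega))
  -- pointwise fixed-point analysis for indices ≤ K
  have hffixK : K % 2 = 1 → f (b K) = b K := by
    intro hKo
    rw [← hbf K hKo, hK]
  have hgfixK : K % 2 = 0 → g (b K) = b K := by
    intro hKe
    rw [← hbg K hKe, hK]
  have hffix : ∀ j, j ≤ K → (f (b j) = b j ↔ (j = 0 ∨ (j = K ∧ K % 2 = 1))) := by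
    intro j hj
    rcases Nat.even_or_odd j with hje | hjo
    · rw [Nat.even_iff] at hje
      by_cases hj0 : j = 0
      · subst hj0
        rw [hb0]
        simp [hfu]
      · have e : f (b j) = b (j - 1) := by
          have := hfb (j - 1) (by omega)
          rwa [show j - 1 + 1 = j from by omega] at this
        have hne : ¬ f (b j) = b j := by
          rw [e]
          exact hdist (j - 1) j (by omega) hj
        constructor
        · exact fun h => absurd h hne
        · rintro (h | ⟨h, hpar⟩) <;> omega
    · rw [Nat.odd_iff] at hjo
      by_cases hjK : j = K
      · subst hjK
        simp [hffixK hjo, hjo]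
      · have e : f (b j) = b (j + 1) := (hbf j hjo).symm
        have hne : ¬ f (b j) = b j := by
          rw [e]
          exact fun h => hdist j (j + 1) (by omega) (by omega) h.symm
        constructor
        · exact fun h => absurd h hne
        · rintro (h | ⟨h, hpar⟩) <;> omega
  have hgfix : ∀ j, j ≤ K → (g (b j) = b j ↔ (j = K ∧ K % 2 = 0)) := by
    intro j hj
    rcases Nat.even_or_odd j with hje | hjo
    · rw [Nat.even_iff] at hje
      by_cases hjK : j = K
      · subst hjK
        simp [hgfixK hje, hje]
      · have e : g (b j) = b (j + 1) := (hbg j hje).symm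
        have hne : ¬ g (b j) = b j := by
          rw [e]
          exact fun h => hdist j (j + 1) (by omega) (by omega) h.symm
        constructor
        · exact fun h => absurd h hne
        · rintro ⟨h, hpar⟩
          omega
    · rw [Nat.odd_iff] at hjo
      have e : g (b j) = b (j - 1) := by
        have := hgb (j - 1) (by omega)
        rwa [show j - 1 + 1 = j from by omega] at this
      have hne : ¬ g (b j) = b j := by
        rw [e]
        exact hdist (j - 1) j (by omega) hj
      constructor
      · exact fun h => absurd h hne
      · rintro ⟨h, hpar⟩
        omega
  -- the vertex set of the alternating path
  refine ⟨(Finset.range (K + 1)).image b, b K,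
    Finset.mem_image.mpr ⟨0, Finset.mem_range.mpr (by omega), hb0⟩,
    Finset.mem_image.mpr ⟨K, Finset.mem_range.mpr (by omega), rfl⟩,
    by rw [← hb0]; exact (hdist 0 K (by omega) le_rfl).symm, ?_, ?_, ?_⟩
  · -- f-invariance
    intro x hx
    obtain ⟨j, hj, rfl⟩ := Finset.mem_image.mp hx
    rw [Finset.mem_range] at hj
    rcases Nat.even_or_odd j with hje | hjo
    · rw [Nat.even_iff] at hje
      by_cases hj0 : j = 0
      · subst hj0
        rw [hb0, hfu, ← hb0]
        exact hx
      · have e : f (b j) = b (j - 1) := by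
          have := hfb (j - 1) (by omega)
          rwa [show j - 1 + 1 = j from by omega] at this
        rw [e]
        exact Finset.mem_image.mpr ⟨j - 1, Finset.mem_range.mpr (by omega), rfl⟩
    · rw [Nat.odd_iff] at hjo
      by_cases hjK : j = K
      · subst hjK
        rw [hffixK hjo]
        exact hx
      · rw [← hbf j hjo]
        exact Finset.mem_image.mpr ⟨j + 1, Finset.mem_range.mpr (by omega), rfl⟩
  · -- g-invariance
    intro x hx
    obtain ⟨j, hj, rfl⟩ := Finset.mem_image.mp hx
    rw [Finset.mem_range] at hj
    rcases Nat.even_or_odd j with hje | hjo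
    · rw [Nat.even_iff] at hje
      by_cases hjK : j = K
      · subst hjK
        rw [hgfixK hje]
        exact hx
      · rw [← hbg j hje]
        exact Finset.mem_image.mpr ⟨j + 1, Finset.mem_range.mpr (by omega), rfl⟩
    · rw [Nat.odd_iff] at hjo
      have e : g (b j) = b (j - 1) := by
        have := hgb (j - 1) (by omega)
        rwa [show j - 1 + 1 = j from by omega] at this
      rw [e]
      exact Finset.mem_image.mpr ⟨j - 1, Finset.mem_range.mpr (by omega), rfl⟩
  · -- fixed point filters
    rcases Nat.even_or_odd K with hKe | hKo
    · rw [Nat.even_iff] at hKe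
      refine Or.inr ⟨?_, ?_⟩
      · ext x
        simp only [Finset.mem_filter, Finset.mem_image, Finset.mem_range, Finset.mem_singleton]
        constructor
        · rintro ⟨⟨j, hj, rfl⟩, hfx⟩
          rcases (hffix j (by omega)).mp hfx with h | ⟨h, hpar⟩
          · rw [h, hb0]
          · omega
        · rintro rfl
          exact ⟨⟨0, by omega, hb0⟩, hfu⟩
      · ext x
        simp only [Finset.mem_filter, Finset.mem_image, Finset.mem_range, Finset.mem_singleton]
        constructor
        · rintro ⟨⟨j, hj, rfl⟩, hgx⟩
          obtain ⟨h, -⟩ := (hgfix j (by omega)).mp hgx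
          rw [h]
        · rintro rfl
          exact ⟨⟨K, by omega, rfl⟩, hgfixK hKe⟩
    · rw [Nat.odd_iff] at hKo
      refine Or.inl ⟨?_, ?_⟩
      · ext x
        simp only [Finset.mem_filter, Finset.mem_image, Finset.mem_range, Finset.mem_insert,
          Finset.mem_singleton]
        constructor
        · rintro ⟨⟨j, hj, rfl⟩, hfx⟩
          rcases (hffix j (by omega)).mp hfx with h | ⟨h, hpar⟩
          · exact Or.inl (by rw [h, hb0])
          · exact Or.inr (by rw [h])
        · rintro (rfl | rfl)
          · exact ⟨⟨0, by omega, hb0⟩, hfu⟩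
          · exact ⟨⟨K, by omega, rfl⟩, hffixK hKo⟩
      · ext x
        simp only [Finset.mem_filter, Finset.mem_image, Finset.mem_range,
          Finset.notMem_empty, iff_false, not_and]
        rintro ⟨j, hj, rfl⟩ hgx
        obtain ⟨h, hpar⟩ := (hgfix j (by omega)).mp hgx
        omega

end Core

section Main

open SimpleGraph

variable {V : Type*}

theorem exists_perfect_matchFn [Fintype V] [DecidableEq V] (H : SimpleGraph V)
    (heven : Even (Fintype.card V))
    (hreach : ∀ u v : V, H.Reachable u v)
    (htrans : ∀ u v : V, ∃ φ : H ≃g H, φ u = v) :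
    ∃ f : V → V, IsMatchFn H f ∧ ∀ v, ¬ f v = v := by
  classical
  by_contra hno
  push_neg at hno
  obtain ⟨f₀, hf₀mem, hf₀max⟩ := (univ.filter (fun f : V → V => IsMatchFn H f)).exists_max_image
      (fun f => (univ.filter (fun v => ¬ f v = v)).card)
      ⟨id, Finset.mem_filter.mpr ⟨Finset.mem_univ _, isMatchFn_id⟩⟩
  have hf₀ : IsMatchFn H f₀ := (Finset.mem_filter.mp hf₀mem).2
  set N := (univ.filter (fun v => ¬ f₀ v = v)).card with hN
  have hmax : ∀ f' : V → V, IsMatchFn H f' →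
      (univ.filter (fun v => ¬ f' v = v)).card ≤ N := fun f' h =>
    hf₀max f' (Finset.mem_filter.mpr ⟨Finset.mem_univ _, h⟩)
  have hfix_even : ∀ f : V → V, IsMatchFn H f →
      Even ((univ.filter (fun v => f v = v)).card) := by
    intro f hf
    have h1 : Even ((univ.filter (fun v => ¬ f v = v)).card) := hf.even_supp
    have h2 : (univ.filter (fun v => f v = v)).card
        + (univ.filter (fun v => ¬ f v = v)).card = Fintype.card V := by
      rw [Finset.card_filter_add_card_filter_not, Finset.card_univ]
    rcases heven with ⟨a, ha⟩
    rcases h1 with ⟨c, hc⟩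
    exact ⟨a - c, by omega⟩
  have two_fixed : ∀ f : V → V, IsMatchFn H f → ∃ x y, f x = x ∧ f y = y ∧ x ≠ y := by
    intro f hf
    obtain ⟨x, hx⟩ := hno f hf
    have hxmem : x ∈ univ.filter (fun v => f v = v) := by simp [hx]
    have hcard : 1 < (univ.filter (fun v => f v = v)).card := by
      have hpos : 0 < (univ.filter (fun v => f v = v)).card := Finset.card_pos.mpr ⟨x, hxmem⟩
      rcases hfix_even f hf with ⟨k, hk⟩
      omega
    obtain ⟨y, hy, hyx⟩ := Finset.exists_mem_ne hcard x
    exact ⟨x, y, hx, (Finset.mem_filter.mp hy).2, fun h => hyx h.symm⟩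
  have hT : ∃ n, ∃ (f : V → V) (u v : V), IsMatchFn H f
      ∧ (univ.filter (fun x => ¬ f x = x)).card = N
      ∧ f u = u ∧ f v = v ∧ u ≠ v ∧ H.dist u v = n := by
    obtain ⟨x, y, hx, hy, hxy⟩ := two_fixed f₀ hf₀
    exact ⟨H.dist x y, f₀, x, y, hf₀, hN.symm, hx, hy, hxy, rfl⟩
  set d := Nat.find hT with hd
  obtain ⟨f, u, v, hf, hfN, hfu, hfv, huv, hduv⟩ := Nat.find_spec hT
  rw [← hd] at hduv
  have hdmin : ∀ m, m < d → ∀ (f' : V → V) (u' v' : V), IsMatchFn H f' →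
      (univ.filter (fun x => ¬ f' x = x)).card = N →
      f' u' = u' → f' v' = v' → u' ≠ v' → ¬ H.dist u' v' = m := by
    intro m hm f' u' v' h1 h2 h3 h4 h5 h6
    exact Nat.find_min hT hm ⟨f', u', v', h1, h2, h3, h4, h5, h6⟩
  have hd1 : 1 ≤ d := by
    have := (hreach u v).pos_dist_of_ne huv
    omega
  by_cases hd1' : d = 1
  · -- adjacent exposed vertices: enlarge the matching, contradiction
    have hadj : H.Adj u v := SimpleGraph.dist_eq_one_iff_adj.mp (by rw [hduv, hd1'])
    set f' : V → V := Function.update (Function.update f u v) v u with hf'def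
    have hf'u : f' u = v := by
      rw [hf'def, Function.update_of_ne huv, Function.update_self]
    have hf'v : f' v = u := by
      rw [hf'def, Function.update_self]
    have hf'other : ∀ x, x ≠ u → x ≠ v → f' x = f x := by
      intro x hxu hxv
      rw [hf'def, Function.update_of_ne hxv, Function.update_of_ne hxu]
    have hf' : IsMatchFn H f' := by
      constructor
      · intro x
        by_cases hxu : x = u
        · subst hxu; rw [hf'u, hf'v]
        by_cases hxv : x = v
        · subst hxv; rw [hf'v, hf'u]
        · have h2 : f x ≠ u := by
            intro h
            apply hxu
            have hx2 : x = f (f x) := (hf.1 x).symm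
            rw [h, hfu] at hx2
            exact hx2
          have h3 : f x ≠ v := by
            intro h
            apply hxv
            have hx2 : x = f (f x) := (hf.1 x).symm
            rw [h, hfv] at hx2
            exact hx2
          rw [hf'other x hxu hxv, hf'other (f x) h2 h3, hf.1]
      · intro x hne
        by_cases hxu : x = u
        · subst hxu; rw [hf'u]; exact hadj
        by_cases hxv : x = v
        · subst hxv; rw [hf'v]; exact hadj.symm
        · rw [hf'other x hxu hxv] at hne ⊢
          exact hf.2 x hne
    have hsub : univ.filter (fun x => ¬ f x = x) ⊂ univ.filter (fun x => ¬ f' x = x) := by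
      rw [Finset.ssubset_iff_of_subset]
      · refine ⟨u, ?_, ?_⟩
        · simp only [Finset.mem_filter, Finset.mem_univ, true_and]
          rw [hf'u]
          exact fun h => huv h.symm
        · simp [hfu]
      · intro x hx
        simp only [Finset.mem_filter, Finset.mem_univ, true_and] at hx ⊢
        have hxu : x ≠ u := fun h => hx (by rw [h, hfu])
        have hxv : x ≠ v := fun h => hx (by rw [h, hfv])
        rw [hf'other x hxu hxv]
        exact hx
    have hlt := Finset.card_lt_card hsub
    have hle := hmax f' hf'
    omega
  · -- d ≥ 2
    have hd2 : 2 ≤ d := by omega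
    obtain ⟨p, hp⟩ := (hreach u v).exists_walk_length_eq_dist
    cases p with
    | nil => exact huv rfl
    | cons hadj q =>
      rename_i w
      rw [SimpleGraph.Walk.length_cons] at hp
      have hwv_le : H.dist w v ≤ d - 1 := by
        have := SimpleGraph.dist_le q
        omega
      have hd_le : d ≤ 1 + H.dist w v := by
        obtain ⟨r, hr⟩ := (hreach w v).exists_walk_length_eq_dist
        have := SimpleGraph.dist_le (SimpleGraph.Walk.cons hadj r)
        rw [SimpleGraph.Walk.length_cons] at this
        omega
      have hwv : H.dist w v = d - 1 := by omega
      have hwv_ne : w ≠ v := by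
        intro h
        rw [h, SimpleGraph.dist_self] at hwv
        omega
      have hwu : u ≠ w := hadj.ne
      have hfw : ¬ f w = w := fun h =>
        hdmin (d - 1) (by omega) f w v hf hfN h hfv hwv_ne hwv
      -- translate f to a maximum matching fixing w
      obtain ⟨φ, hφ⟩ := htrans u w
      obtain ⟨hg₁, hg₁card⟩ := hf.iso φ
      have hg₁w : φ (f (φ.symm w)) = w := by
        have hsymm : φ.symm w = u := by rw [← hφ]; simp
        rw [hsymm, hfu, hφ]
      have hg₁mem : (fun x => φ (f (φ.symm x))) ∈ univ.filter (fun g : V → V =>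
          IsMatchFn H g ∧ (univ.filter (fun x => ¬ g x = x)).card = N ∧ g w = w) := by
        refine Finset.mem_filter.mpr ⟨Finset.mem_univ _, hg₁, ?_, hg₁w⟩
        rw [hg₁card, hfN]
      obtain ⟨g, hgmem, hgmax⟩ := Finset.exists_max_image _
        (fun g : V → V => (univ.filter (fun x => g x = f x)).card) ⟨_, hg₁mem⟩
      obtain ⟨-, hg, hgN, hgw⟩ := Finset.mem_filter.mp hgmem
      have hgu : ¬ g u = u := by
        intro h
        have hdist_uw : H.dist u w = 1 := SimpleGraph.dist_eq_one_iff_adj.mpr hadj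
        exact hdmin 1 (by omega) g u w hg hgN h hgw hwu hdist_uw
      -- alternating path between the f-exposed u and the g-exposed end
      obtain ⟨P, z, huP, hzP, hzu, hfP, hgP, hcases⟩ :=
        exists_alternating_path hf.1 hg.1 hfu hgu
      have hh : IsMatchFn H (fun x => if x ∈ P then g x else f x) := glue_matchFn hf hg P hfP hgP
      have hdisj : Disjoint (P.filter (fun x => g x = x))
          ((univ.filter (fun x => f x = x)) \ P) :=
        Finset.disjoint_left.mpr (fun a ha hb =>
          (Finset.mem_sdiff.mp hb).2 (Finset.mem_filter.mp ha).1)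
      have hinter : (univ.filter (fun x => f x = x)) ∩ P = P.filter (fun x => f x = x) := by
        ext x; simp [and_comm]
      have hcardh : (univ.filter (fun x => (if x ∈ P then g x else f x) = x)).card
          = (P.filter (fun x => g x = x)).card
            + ((univ.filter (fun x => f x = x)).card - (P.filter (fun x => f x = x)).card) := by
        rw [glue_fixset f g P, Finset.card_union_of_disjoint hdisj]
        have h2 := Finset.card_sdiff_add_card_inter (univ.filter (fun x => f x = x)) P
        rw [hinter] at h2
        omega
      have e1 : (univ.filter (fun x => f x = x)).card
          + (univ.filter (fun x => ¬ f x = x)).card = Fintype.card V := by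
        rw [Finset.card_filter_add_card_filter_not, Finset.card_univ]
      have e2 : (univ.filter (fun x => (if x ∈ P then g x else f x) = x)).card
          + (univ.filter (fun x => ¬ (if x ∈ P then g x else f x) = x)).card
          = Fintype.card V := by
        rw [Finset.card_filter_add_card_filter_not, Finset.card_univ]
      have e3 : (univ.filter (fun x => ¬ (if x ∈ P then g x else f x) = x)).card ≤ N :=
        hmax _ hh
      rcases hcases with ⟨hPf, hPg⟩ | ⟨hPf, hPg⟩
      · -- path with both ends f-exposed: matching can be improved, contradiction
        have hc1 : (P.filter (fun x => f x = x)).card = 2 := by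
          rw [hPf, Finset.card_insert_of_notMem (by simp [Ne.symm hzu]), Finset.card_singleton]
        have hc2 : (P.filter (fun x => g x = x)).card = 0 := by
          rw [hPg]; rfl
        have hFf2 : 2 ≤ (univ.filter (fun x => f x = x)).card := by
          have hsub2 : P.filter (fun x => f x = x) ⊆ univ.filter (fun x => f x = x) := by
            intro x hx
            simp only [Finset.mem_filter, Finset.mem_univ, true_and] at hx ⊢
            exact hx.2
          have := Finset.card_le_card hsub2
          omega
        omega
      · -- path from f-exposed u to g-exposed z
        have hc1 : (P.filter (fun x => f x = x)).card = 1 := by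
          rw [hPf, Finset.card_singleton]
        have hc2 : (P.filter (fun x => g x = x)).card = 1 := by
          rw [hPg, Finset.card_singleton]
        have hgz : g z = z := by
          have hz2 : z ∈ P.filter (fun x => g x = x) := by
            rw [hPg]; exact Finset.mem_singleton_self z
          exact (Finset.mem_filter.mp hz2).2
        have hFf1 : 1 ≤ (univ.filter (fun x => f x = x)).card :=
          Finset.card_pos.mpr ⟨u, by simp [hfu]⟩
        have hhN : (univ.filter (fun x => ¬ (if x ∈ P then g x else f x) = x)).card = N := by
          omega
        by_cases hwz : w = z
        · -- the new maximum matching exposes both w and v, at distance d-1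
          have hwP : w ∈ P := by rw [hwz]; exact hzP
          have hhw : (if w ∈ P then g w else f w) = w := by
            rw [if_pos hwP, hwz]; exact hgz
          have hvP : v ∉ P := by
            intro hvP
            have hv2 : v ∈ P.filter (fun x => f x = x) := Finset.mem_filter.mpr ⟨hvP, hfv⟩
            rw [hPf] at hv2
            exact huv (Finset.mem_singleton.mp hv2).symm
          have hhv : (if v ∈ P then g v else f v) = v := by
            rw [if_neg hvP]; exact hfv
          exact hdmin (d - 1) (by omega) _ w v hh hhN hhw hhv hwv_ne hwv
        · -- switch g along the path: agreement with f strictly increases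
          have hwP : w ∉ P := by
            intro hwP
            have hw2 : w ∈ P.filter (fun x => g x = x) := Finset.mem_filter.mpr ⟨hwP, hgw⟩
            rw [hPg] at hw2
            exact hwz (Finset.mem_singleton.mp hw2)
          have hg' : IsMatchFn H (fun x => if x ∈ P then f x else g x) :=
            glue_matchFn hg hf P hgP hfP
          have hdisj' : Disjoint (P.filter (fun x => f x = x))
              ((univ.filter (fun x => g x = x)) \ P) :=
            Finset.disjoint_left.mpr (fun a ha hb =>
              (Finset.mem_sdiff.mp hb).2 (Finset.mem_filter.mp ha).1)
          have hinter' : (univ.filter (fun x => g x = x)) ∩ P = P.filter (fun x => g x = x) := by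
            ext x; simp [and_comm]
          have hcardg' : (univ.filter (fun x => (if x ∈ P then f x else g x) = x)).card
              = (P.filter (fun x => f x = x)).card
                + ((univ.filter (fun x => g x = x)).card
                  - (P.filter (fun x => g x = x)).card) := by
            rw [glue_fixset g f P, Finset.card_union_of_disjoint hdisj']
            have h2 := Finset.card_sdiff_add_card_inter (univ.filter (fun x => g x = x)) P
            rw [hinter'] at h2
            omega
          have e4 : (univ.filter (fun x => g x = x)).card
              + (univ.filter (fun x => ¬ g x = x)).card = Fintype.card V := by
            rw [Finset.card_filter_add_card_filter_not, Finset.card_univ]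
          have e5 : (univ.filter (fun x => (if x ∈ P then f x else g x) = x)).card
              + (univ.filter (fun x => ¬ (if x ∈ P then f x else g x) = x)).card
              = Fintype.card V := by
            rw [Finset.card_filter_add_card_filter_not, Finset.card_univ]
          have hFg1 : 1 ≤ (univ.filter (fun x => g x = x)).card :=
            Finset.card_pos.mpr ⟨z, by simp [hgz]⟩
          have hg'N : (univ.filter (fun x => ¬ (if x ∈ P then f x else g x) = x)).card = N := by
            omega
          have hg'w : (if w ∈ P then f w else g w) = w := by
            rw [if_neg hwP]; exact hgw
          have hg'mem : (fun x => if x ∈ P then f x else g x) ∈ univ.filter (fun g' : V → V =>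
              IsMatchFn H g' ∧ (univ.filter (fun x => ¬ g' x = x)).card = N ∧ g' w = w) :=
            Finset.mem_filter.mpr ⟨Finset.mem_univ _, hg', hg'N, hg'w⟩
          have hagree : (univ.filter (fun x => (if x ∈ P then f x else g x) = f x)).card
              ≤ (univ.filter (fun x => g x = f x)).card := hgmax _ hg'mem
          have hss : univ.filter (fun x => g x = f x)
              ⊂ univ.filter (fun x => (if x ∈ P then f x else g x) = f x) := by
            rw [Finset.ssubset_iff_of_subset]
            · refine ⟨u, ?_, ?_⟩
              · simp only [Finset.mem_filter, Finset.mem_univ, true_and]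
                rw [if_pos huP]
              · simp only [Finset.mem_filter, Finset.mem_univ, true_and]
                rw [hfu]
                exact hgu
            · intro x hx
              simp only [Finset.mem_filter, Finset.mem_univ, true_and] at hx ⊢
              by_cases hxP : x ∈ P
              · rw [if_pos hxP]
              · rw [if_neg hxP]; exact hx
          have := Finset.card_lt_card hss
          omega

end Main

section Cayley

variable {G : Type*} [Group G]

/-- Left translation as an automorphism of the Cayley graph. -/
def cayleyMulLeft (S : Set G) (t : G) : cayleyGraph S ≃g cayleyGraph S where
  toEquiv := Equiv.mulLeft t
  map_rel_iff' := by
    intro a b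
    have h1 : (t * a)⁻¹ * (t * b) = a⁻¹ * b := by group
    have h2 : (t * b)⁻¹ * (t * a) = b⁻¹ * a := by group
    show (t * a ≠ t * b ∧ ((t * a)⁻¹ * (t * b) ∈ S ∨ (t * b)⁻¹ * (t * a) ∈ S))
      ↔ (a ≠ b ∧ (a⁻¹ * b ∈ S ∨ b⁻¹ * a ∈ S))
    rw [h1, h2]
    simp [ne_eq, mul_right_inj]

lemma cayley_reachable {S : Set G} (hone : (1 : G) ∉ S)
    (hgen : Subgroup.closure S = ⊤) (u v : G) : (cayleyGraph S).Reachable u v := by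
  have key : ∀ g : G, (cayleyGraph S).Reachable 1 g := by
    intro g
    have hg : g ∈ Subgroup.closure S := by rw [hgen]; trivial
    induction hg using Subgroup.closure_induction with
    | mem x hx =>
      refine SimpleGraph.Adj.reachable ?_
      refine ⟨fun h => hone (h ▸ hx), Or.inl ?_⟩
      simpa using hx
    | one => exact SimpleGraph.Reachable.refl 1
    | mul x y hx hy ihx ihy =>
      have h1 := ihy.map (cayleyMulLeft S x).toHom
      have h2 : (cayleyGraph S).Reachable x (x * y) := by
        simpa [cayleyMulLeft] using h1
      exact ihx.trans h2
    | inv x hx ih =>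
      have h1 := ih.map (cayleyMulLeft S x⁻¹).toHom
      have h2 : (cayleyGraph S).Reachable x⁻¹ 1 := by
        simpa [cayleyMulLeft] using h1
      exact h2.symm
  have h1 := (key (u⁻¹ * v)).map (cayleyMulLeft S u).toHom
  simpa [cayleyMulLeft] using h1

end Cayley


/-- Let `G` be a finite group of even order and `S ⊆ G` a symmetric subset
(`S = S⁻¹`, `1 ∉ S`) generating `G`.  Then the Cayley graph of `G` with respect to `S` has a
perfect matching. -/
theorem cayleyGraph_even_order_has_perfectMatching
    {G : Type*} [Group G] [Fintype G]
    (heven : Even (Fintype.card G))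
    (S : Set G) (hsymm : S⁻¹ = S) (hone : (1 : G) ∉ S)
    (hgen : Subgroup.closure S = ⊤) :
    ∃ M : (cayleyGraph S).Subgraph, M.IsPerfectMatching := by
  classical
  obtain ⟨f, hf, hfperf⟩ := exists_perfect_matchFn (cayleyGraph S) heven
    (cayley_reachable hone hgen)
    (fun u v => ⟨cayleyMulLeft S (v * u⁻¹), by simp [cayleyMulLeft]⟩)
  refine ⟨{ verts := Set.univ
            Adj := fun v w => f v = w
            adj_sub := ?_
            edge_vert := fun _ => Set.mem_univ _
            symm := ?_ }, ?_, fun v => Set.mem_univ v⟩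
  · rintro v w rfl
    exact hf.2 v (hfperf v)
  · refine ⟨?_⟩
    rintro v w rfl
    exact hf.1 v
  · rintro v -
    exact ⟨f v, rfl, fun y hy => Eq.symm hy⟩
end

section
/- Let k ≥ 3, let X be a finite simple k-regular graph on n vertices whose second largest eigenvalue satisfies λ₁(X) ≤ 2√(k−1), and let F be a perfect matching of X. Then the (k−1)-regular graph X − F obtained by deleting the edges of F satisfies λ₁(X − F) ≤ 1 + 2√(k−1). -/
open scoped Classical
open scoped Matrix

open Polynomial in
lemma aux_charpoly_conj {n : Type*} [Fintype n] [DecidableEq n] {R : Type*} [CommRing R]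
    (U D V : Matrix n n R) (hUV : U * V = 1) :
    (U * D * V).charpoly = D.charpoly := by
  have hmul : ∀ (M N : Matrix n n R), (M * N).map (C : R → R[X]) = M.map C * N.map C :=
    fun M N => Matrix.map_mul
  have h1 : (U.map (C : R → R[X])) * (V.map C) = 1 := by
    rw [← hmul, hUV]
    exact Matrix.map_one _ (map_zero C) (map_one C)
  have hscalar : ∀ W : Matrix n n R[X],
      W * Matrix.scalar n (X : R[X]) = Matrix.scalar n (X : R[X]) * W := by
    intro W
    exact (Matrix.scalar_commute (X : R[X]) (fun r' => Commute.all _ _) W).symm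
  have h : Matrix.charmatrix (U * D * V) = U.map C * Matrix.charmatrix D * V.map C := by
    unfold Matrix.charmatrix
    rw [Matrix.mul_sub, Matrix.sub_mul]
    simp only [RingHom.mapMatrix_apply]
    congr 1
    · rw [hscalar, Matrix.mul_assoc, h1, Matrix.mul_one]
    · rw [hmul, hmul]
  have h2 : (U.map (C : R → R[X])).det * (V.map C).det = 1 := by
    rw [← Matrix.det_mul, h1, Matrix.det_one]
  rw [Matrix.charpoly, Matrix.charpoly, h, Matrix.det_mul, Matrix.det_mul,
    mul_right_comm, h2, one_mul]

open Polynomial in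
lemma aux_roots_charpoly {n : Type*} [Fintype n] [DecidableEq n]
    {A : Matrix n n ℝ} (hA : A.IsHermitian) :
    A.charpoly.roots = Finset.univ.val.map hA.eigenvalues := by
  have hmem := hA.eigenvectorUnitary.2
  rw [Unitary.mem_iff] at hmem
  have h1 : (hA.eigenvectorUnitary : Matrix n n ℝ) *
      star (hA.eigenvectorUnitary : Matrix n n ℝ) = 1 := hmem.2
  have hU := hA.spectral_theorem
  rw [Unitary.conjStarAlgAut_apply] at hU
  have hd : (Matrix.diagonal (RCLike.ofReal ∘ hA.eigenvalues) : Matrix n n ℝ)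
      = Matrix.diagonal hA.eigenvalues := by
    ext i j
    simp [Matrix.diagonal, Function.comp]
  have key : A.charpoly = (Matrix.diagonal hA.eigenvalues).charpoly := by
    conv_lhs => rw [hU]
    rw [aux_charpoly_conj _ _ _ h1, hd]
  rw [key]
  have hcm : Matrix.charmatrix (Matrix.diagonal hA.eigenvalues)
      = Matrix.diagonal (fun i => (X : ℝ[X]) - C (hA.eigenvalues i)) := by
    apply Matrix.ext
    intro i j
    by_cases h : i = j
    · subst h; rw [Matrix.charmatrix_apply_eq, Matrix.diagonal_apply_eq, Matrix.diagonal_apply_eq]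
    · rw [Matrix.charmatrix_apply_ne _ _ _ h, Matrix.diagonal_apply_ne _ h,
        Matrix.diagonal_apply_ne _ h]
      simp
  have hch : (Matrix.diagonal hA.eigenvalues).charpoly
      = ((Finset.univ.val.map hA.eigenvalues).map (fun a => X - C a)).prod := by
    rw [Matrix.charpoly, hcm, Matrix.det_diagonal, Multiset.map_map]
    rfl
  rw [hch, roots_multiset_prod_X_sub_C]


lemma aux_spectral {n : Type*} [Fintype n] [DecidableEq n] {M : Matrix n n ℝ}
    (hM : M.IsHermitian) :
    ∃ U : Matrix n n ℝ, U * Uᵀ = 1 ∧ Uᵀ * U = 1 ∧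
      M = U * Matrix.diagonal hM.eigenvalues * Uᵀ := by
  refine ⟨(hM.eigenvectorUnitary : Matrix n n ℝ), ?_, ?_, ?_⟩
  · have h := (Unitary.mem_iff.mp hM.eigenvectorUnitary.2).2
    rwa [Matrix.star_eq_conjTranspose, Matrix.conjTranspose_eq_transpose_of_trivial] at h
  · have h := (Unitary.mem_iff.mp hM.eigenvectorUnitary.2).1
    rwa [Matrix.star_eq_conjTranspose, Matrix.conjTranspose_eq_transpose_of_trivial] at h
  · have hd : Matrix.diagonal (RCLike.ofReal ∘ hM.eigenvalues) = Matrix.diagonal hM.eigenvalues := by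
      apply Matrix.ext; intro i j; simp [Matrix.diagonal, Function.comp]
    have h := hM.spectral_theorem
    rwa [hd, Unitary.conjStarAlgAut_apply, Matrix.star_eq_conjTranspose, Matrix.conjTranspose_eq_transpose_of_trivial] at h

lemma aux_dot_conj {n : Type*} [Fintype n] [DecidableEq n] {U : Matrix n n ℝ}
    (hU : U * Uᵀ = 1) (x x' : n → ℝ) :
    x ⬝ᵥ x' = (Uᵀ *ᵥ x) ⬝ᵥ (Uᵀ *ᵥ x') := by
  calc x ⬝ᵥ x' = x ⬝ᵥ ((U * Uᵀ) *ᵥ x') := by rw [hU, Matrix.one_mulVec]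
  _ = x ⬝ᵥ (U *ᵥ (Uᵀ *ᵥ x')) := by rw [Matrix.mulVec_mulVec]
  _ = (x ᵥ* U) ⬝ᵥ (Uᵀ *ᵥ x') := by rw [Matrix.dotProduct_mulVec]
  _ = (Uᵀ *ᵥ x) ⬝ᵥ (Uᵀ *ᵥ x') := by rw [← Matrix.mulVec_transpose]

lemma aux_quad_form {n : Type*} [Fintype n] [DecidableEq n] {U : Matrix n n ℝ}
    {M : Matrix n n ℝ} {d : n → ℝ} (hU : U * Uᵀ = 1)
    (hM : M = U * Matrix.diagonal d * Uᵀ) (x : n → ℝ) :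
    x ⬝ᵥ (M *ᵥ x) = ∑ i, d i * ((Uᵀ *ᵥ x) i) ^ 2 := by
  calc x ⬝ᵥ (M *ᵥ x) = x ⬝ᵥ ((U * (Matrix.diagonal d * Uᵀ)) *ᵥ x) := by
        rw [← Matrix.mul_assoc, ← hM]
  _ = x ⬝ᵥ (U *ᵥ ((Matrix.diagonal d * Uᵀ) *ᵥ x)) := by rw [Matrix.mulVec_mulVec]
  _ = (x ᵥ* U) ⬝ᵥ (Matrix.diagonal d *ᵥ (Uᵀ *ᵥ x)) := by
        rw [Matrix.dotProduct_mulVec, Matrix.mulVec_mulVec]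
  _ = (Uᵀ *ᵥ x) ⬝ᵥ (Matrix.diagonal d *ᵥ (Uᵀ *ᵥ x)) := by rw [← Matrix.mulVec_transpose]
  _ = ∑ i, d i * ((Uᵀ *ᵥ x) i) ^ 2 := by
        simp only [dotProduct, Matrix.mulVec_diagonal]
        refine Finset.sum_congr rfl fun i _ => by ring

/-- Let `k ≥ 3`, let `X` be a finite simple `k`-regular graph on `n`
vertices whose second largest adjacency eigenvalue satisfies `λ₁(X) ≤ 2√(k-1)`, and let `F`
be a perfect matching of `X`.  Then the `(k-1)`-regular graph `X - F` obtained by deleting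
the edges of `F` satisfies `λ₁(X - F) ≤ 1 + 2√(k-1)`.  Here `λ₀ ≥ λ₁ ≥ ⋯` are the
eigenvalues in decreasing order with multiplicity (the roots of the characteristic
polynomial of the adjacency matrix). -/
theorem expander_from_deleting_perfect_matching
    (n k : ℕ) (hk : 3 ≤ k) (hn : 1 < n)
    (X : SimpleGraph (Fin n))
    (hreg : X.IsRegularOfDegree k)
    (F : Set (Sym2 (Fin n))) (hFE : F ⊆ X.edgeSet)
    (hF : ∀ v : Fin n, ∃! e, e ∈ F ∧ v ∈ e)
    (lam mu : Fin n → ℝ) (hlam : Antitone lam) (hmu : Antitone mu)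
    (hlam' : (SimpleGraph.adjMatrix ℝ X).charpoly.roots = Finset.univ.val.map lam)
    (hmu' : (SimpleGraph.adjMatrix ℝ (X.deleteEdges F)).charpoly.roots
        = Finset.univ.val.map mu)
    (hgap : lam ⟨1, hn⟩ ≤ 2 * Real.sqrt ((k : ℝ) - 1)) :
    mu ⟨1, hn⟩ ≤ 1 + 2 * Real.sqrt ((k : ℝ) - 1) := by
  classical
  set L := lam ⟨1, hn⟩ with hLdef
  set m := mu ⟨1, hn⟩ with hmdef
  set A := SimpleGraph.adjMatrix ℝ X with hAdef
  set B := SimpleGraph.adjMatrix ℝ (X.deleteEdges F) with hBdef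
  have hAh : A.IsHermitian := by
    rw [Matrix.IsHermitian, Matrix.conjTranspose_eq_transpose_of_trivial]
    exact SimpleGraph.isSymm_adjMatrix X
  have hBh : B.IsHermitian := by
    rw [Matrix.IsHermitian, Matrix.conjTranspose_eq_transpose_of_trivial]
    exact SimpleGraph.isSymm_adjMatrix (X.deleteEdges F)
  set α := hAh.eigenvalues with hαdef
  set β := hBh.eigenvalues with hβdef
  -- eigenvalue multisets agree with lam, mu
  have hmapα : Multiset.map α Finset.univ.val = Multiset.map lam Finset.univ.val := by
    rw [← aux_roots_charpoly hAh, hlam']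
  have hmapβ : Multiset.map β Finset.univ.val = Multiset.map mu Finset.univ.val := by
    rw [← aux_roots_charpoly hBh, hmu']
  -- count transfer
  have key : ∀ (f g : Fin n → ℝ),
      Multiset.map f Finset.univ.val = Multiset.map g Finset.univ.val →
      ∀ (p : ℝ → Prop),
      (Finset.univ.filter (fun i => p (f i))).card
        = (Finset.univ.filter (fun i => p (g i))).card := by
    intro f g h p
    have h2 := congrArg (Multiset.countP p) h
    rw [Multiset.countP_map, Multiset.countP_map] at h2
    exact h2
  -- at most one eigenvalue of A exceeds L
  have hα1 : (Finset.univ.filter (fun i => L < α i)).card ≤ 1 := by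
    rw [key α lam hmapα (fun x => L < x)]
    have hsub : (Finset.univ.filter (fun i => L < lam i)) ⊆ {⟨0, Nat.lt_of_lt_of_le Nat.zero_lt_one hn.le⟩} := by
      intro i hi
      rw [Finset.mem_filter] at hi
      rw [Finset.mem_singleton]
      by_contra hne
      have h1 : (⟨1, hn⟩ : Fin n) ≤ i := by
        rcases Nat.lt_or_ge i.val 1 with h | h
        · exact absurd (Fin.ext (Nat.lt_one_iff.mp h)) hne
        · exact h
      exact absurd (hlam h1) (not_le.mpr hi.2)
    calc (Finset.univ.filter (fun i => L < lam i)).card ≤ _ := Finset.card_le_card hsub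
    _ = 1 := Finset.card_singleton _
  -- at least two eigenvalues of B are ≥ m
  have hβ2 : 2 ≤ (Finset.univ.filter (fun i => m ≤ β i)).card := by
    rw [key β mu hmapβ (fun x => m ≤ x)]
    have hsub : ({⟨0, Nat.lt_of_lt_of_le Nat.zero_lt_one hn.le⟩, ⟨1, hn⟩} : Finset (Fin n))
        ⊆ Finset.univ.filter (fun i => m ≤ mu i) := by
      intro i hi
      rw [Finset.mem_insert, Finset.mem_singleton] at hi
      rw [Finset.mem_filter]
      refine ⟨Finset.mem_univ _, ?_⟩
      rcases hi with rfl | rfl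
      · exact hmu (by exact Nat.zero_le 1)
      · exact le_rfl
    calc (2 : ℕ) = ({⟨0, Nat.lt_of_lt_of_le Nat.zero_lt_one hn.le⟩, ⟨1, hn⟩} : Finset (Fin n)).card := by
          rw [Finset.card_insert_of_notMem (by simp [Fin.ext_iff]), Finset.card_singleton]
    _ ≤ _ := Finset.card_le_card hsub
  obtain ⟨i, hi, j, hj, hij⟩ := Finset.one_lt_card.mp (lt_of_lt_of_le one_lt_two hβ2)
  rw [Finset.mem_filter] at hi hj
  have hβi : m ≤ β i := hi.2
  have hβj : m ≤ β j := hj.2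
  -- L < k
  have hk3 : (3 : ℝ) ≤ (k : ℝ) := by exact_mod_cast hk
  have hLk : L < (k : ℝ) := by
    by_contra hcon
    push_neg at hcon
    have hs := Real.sq_sqrt (show (0:ℝ) ≤ (k:ℝ) - 1 by linarith)
    nlinarith [Real.sqrt_nonneg ((k:ℝ) - 1)]
  -- the matching involution
  have he1 : ∀ v : Fin n, (hF v).choose ∈ F := fun v => (hF v).choose_spec.1.1
  have he2 : ∀ v : Fin n, v ∈ (hF v).choose := fun v => (hF v).choose_spec.1.2
  have heu : ∀ (v : Fin n) (f : Sym2 (Fin n)), f ∈ F → v ∈ f → f = (hF v).choose :=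
    fun v f h1 h2 => (hF v).choose_spec.2 f ⟨h1, h2⟩
  set σ : Fin n → Fin n := fun v => Sym2.Mem.other (he2 v) with hσdef
  have hσ : ∀ v, s(v, σ v) = (hF v).choose := fun v => Sym2.other_spec (he2 v)
  have hkey : ∀ v w, s(v, w) ∈ F ↔ σ v = w := by
    intro v w
    constructor
    · intro h
      have h2 : s(v, w) = (hF v).choose := heu v _ h (Sym2.mem_mk_left v w)
      exact Sym2.congr_right.mp ((hσ v).trans h2.symm)
    · rintro rfl
      rw [hσ v]
      exact he1 v
  have hσadj : ∀ v, X.Adj v (σ v) := by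
    intro v
    have h := hFE (he1 v)
    rw [← hσ v, SimpleGraph.mem_edgeSet] at h
    exact h
  have hσinv : Function.Involutive σ := by
    intro v
    have h1 : (hF (σ v)).choose = (hF v).choose :=
      (heu (σ v) _ (he1 v) (by rw [← hσ v]; exact Sym2.mem_mk_right _ _)).symm
    have h2 : s(σ v, σ (σ v)) = s(σ v, v) := by
      rw [hσ (σ v), h1, ← hσ v, Sym2.eq_swap]
    exact Sym2.congr_right.mp h2
  -- entrywise decomposition A = B + matching matrix
  have hAB : ∀ v w, A v w = B v w + (if σ v = w then (1:ℝ) else 0) := by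
    intro v w
    rw [hAdef, hBdef]
    by_cases hvw : X.Adj v w
    · by_cases hf : s(v, w) ∈ F
      · rw [if_pos ((hkey v w).mp hf)]
        simp [SimpleGraph.deleteEdges_adj, hvw, hf]
      · rw [if_neg (fun h => hf ((hkey v w).mpr h))]
        simp [SimpleGraph.deleteEdges_adj, hvw, hf]
    · have hf : ¬ σ v = w := by
        intro h
        exact hvw (by rw [← h]; exact hσadj v)
      simp [SimpleGraph.deleteEdges_adj, hvw, hf]
  -- quadratic form comparison from the matching
  have hmatch : ∀ x : Fin n → ℝ, x ⬝ᵥ (B *ᵥ x) ≤ x ⬝ᵥ (A *ᵥ x) + x ⬝ᵥ x := by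
    intro x
    have hAv : ∀ v, (A *ᵥ x) v = (B *ᵥ x) v + x (σ v) := by
      intro v
      simp only [Matrix.mulVec, dotProduct, hAB, add_mul, Finset.sum_add_distrib,
        ite_mul, one_mul, zero_mul, Finset.sum_ite_eq, Finset.mem_univ, if_true]
    have h1 : x ⬝ᵥ (A *ᵥ x) = x ⬝ᵥ (B *ᵥ x) + ∑ v, x v * x (σ v) := by
      simp only [dotProduct, hAv, mul_add, Finset.sum_add_distrib]
    have h3 : ∑ v, x (σ v) * x (σ v) = ∑ v, x v * x v :=
      Fintype.sum_bijective σ hσinv.bijective _ _ (fun v => rfl)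
    have h2 : -(x ⬝ᵥ x) ≤ ∑ v, x v * x (σ v) := by
      have h4 : ∀ v ∈ Finset.univ, -(x v * x v + x (σ v) * x (σ v)) / 2 ≤ x v * x (σ v) :=
        fun v _ => by nlinarith [sq_nonneg (x v + x (σ v))]
      have h5 : ∑ v, (-(x v * x v + x (σ v) * x (σ v)) / 2) = -(x ⬝ᵥ x) := by
        rw [dotProduct]
        rw [← Finset.sum_div, Finset.sum_neg_distrib, Finset.sum_add_distrib, h3]
        ring
      calc -(x ⬝ᵥ x) = ∑ v, (-(x v * x v + x (σ v) * x (σ v)) / 2) := h5.symm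
      _ ≤ ∑ v, x v * x (σ v) := Finset.sum_le_sum h4
    linarith [h1, h2]
  -- spectral decompositions
  obtain ⟨U, hU1, hU0, hUspec⟩ := aux_spectral hAh
  obtain ⟨W, hW1, hW0, hWspec⟩ := aux_spectral hBh
  -- Rayleigh bound for A on the orthogonal complement of the all-ones vector
  have hone : ∀ v : Fin n, (fun _ : Fin n => (1:ℝ)) v = 1 := fun _ => rfl
  have hAone : A *ᵥ (fun _ => (1:ℝ)) = fun _ => (k : ℝ) := by
    funext v
    rw [hAdef]
    simpa using SimpleGraph.adjMatrix_mulVec_const_apply_of_regular (α := ℝ) (a := 1) hreg (v := v)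
  have hABdd : ∀ x : Fin n → ℝ, (fun _ => (1:ℝ)) ⬝ᵥ x = 0 →
      x ⬝ᵥ (A *ᵥ x) ≤ L * (x ⬝ᵥ x) := by
    intro x hx
    set y := Uᵀ *ᵥ x with hydef
    set z := Uᵀ *ᵥ (fun _ => (1:ℝ)) with hzdef
    have hzy : z ⬝ᵥ y = 0 := by rw [hzdef, hydef, ← aux_dot_conj hU1]; exact hx
    have hz : ∀ i2, α i2 * z i2 = (k : ℝ) * z i2 := by
      have hUA : Uᵀ * A = Matrix.diagonal α * Uᵀ := by
        rw [hUspec, ← Matrix.mul_assoc, ← Matrix.mul_assoc, hU0, Matrix.one_mul]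
      have h2 : Matrix.diagonal α *ᵥ z = (k : ℝ) • z := by
        have hksmul : (fun _ : Fin n => (k:ℝ)) = (k:ℝ) • (fun _ : Fin n => (1:ℝ)) := by
          funext v; simp
        rw [hzdef, Matrix.mulVec_mulVec, ← hUA, ← Matrix.mulVec_mulVec, hAone, hksmul,
          Matrix.mulVec_smul]
      intro i2
      have h3 := congrFun h2 i2
      rw [Matrix.mulVec_diagonal] at h3
      simpa using h3
    have hterm : ∀ i2 ∈ Finset.univ, α i2 * (y i2) ^ 2 ≤ L * (y i2) ^ 2 := by
      intro i2 _
      by_cases hle : α i2 ≤ L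
      · exact mul_le_mul_of_nonneg_right hle (sq_nonneg _)
      · push_neg at hle
        have hz0 : ∀ j2, j2 ≠ i2 → z j2 = 0 := by
          intro j2 hne
          have hj2 : α j2 ≤ L := by
            by_contra hcon
            push_neg at hcon
            have hmem1 : i2 ∈ Finset.univ.filter (fun i => L < α i) :=
              Finset.mem_filter.mpr ⟨Finset.mem_univ _, hle⟩
            have hmem2 : j2 ∈ Finset.univ.filter (fun i => L < α i) :=
              Finset.mem_filter.mpr ⟨Finset.mem_univ _, hcon⟩
            exact hne (Finset.card_le_one.mp hα1 _ hmem2 _ hmem1)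
          have h4 : (α j2 - (k:ℝ)) * z j2 = 0 := by linear_combination hz j2
          rcases mul_eq_zero.mp h4 with h | h
          · exact absurd h (by intro hcon; nlinarith)
          · exact h
        have hzi : z i2 ≠ 0 := by
          intro h0
          have hz00 : z = 0 := by
            funext j2
            by_cases h : j2 = i2
            · rw [h]; exact h0
            · exact hz0 j2 h
          have h1 : (fun _ : Fin n => (1:ℝ)) = U *ᵥ z := by
            rw [hzdef, Matrix.mulVec_mulVec, hU1, Matrix.one_mulVec]
          rw [hz00, Matrix.mulVec_zero] at h1
          exact one_ne_zero (congrFun h1 ⟨0, Nat.lt_of_lt_of_le Nat.zero_lt_one hn.le⟩)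
        have hy0 : y i2 = 0 := by
          have hsum : z ⬝ᵥ y = z i2 * y i2 := by
            rw [dotProduct]
            refine Finset.sum_eq_single i2 (fun j2 _ hne => by rw [hz0 j2 hne, zero_mul])
              (fun h => absurd (Finset.mem_univ _) h)
          rw [hsum] at hzy
          rcases mul_eq_zero.mp hzy with h | h
          · exact absurd h hzi
          · exact h
        rw [hy0]
        simp
    calc x ⬝ᵥ (A *ᵥ x) = ∑ i2, α i2 * (y i2) ^ 2 := aux_quad_form hU1 hUspec x
    _ ≤ ∑ i2, L * (y i2) ^ 2 := Finset.sum_le_sum hterm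
    _ = L * (y ⬝ᵥ y) := by rw [dotProduct, Finset.mul_sum]; exact Finset.sum_congr rfl fun i2 _ => by ring
    _ = L * (x ⬝ᵥ x) := by rw [hydef, ← aux_dot_conj hU1]
  -- construct a test vector from two eigenvectors of B, orthogonal to the ones vector
  set q := Wᵀ *ᵥ (fun _ => (1:ℝ)) with hqdef
  obtain ⟨a, b, hab0, habpos⟩ : ∃ a b : ℝ, a * q i + b * q j = 0 ∧ 0 < a ^ 2 + b ^ 2 := by
    by_cases hq : q i = 0 ∧ q j = 0
    · exact ⟨1, 0, by rw [hq.1, hq.2]; ring, by norm_num⟩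
    · refine ⟨q j, -(q i), by ring, ?_⟩
      rcases not_and_or.mp hq with h | h
      · have := sq_pos_of_ne_zero h
        nlinarith [sq_nonneg (q j)]
      · have := sq_pos_of_ne_zero h
        nlinarith [sq_nonneg (q i)]
  set w : Fin n → ℝ := fun l => if l = i then a else if l = j then b else 0 with hwdef
  set x := W *ᵥ w with hxdef
  have hWx : Wᵀ *ᵥ x = w := by
    rw [hxdef, Matrix.mulVec_mulVec, hW0, Matrix.one_mulVec]
  have hsum : ∀ f : Fin n → ℝ, (∑ l, f l * w l) = f i * a + f j * b := by
    intro f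
    have hzero : ∀ l ∈ Finset.univ, l ∉ ({i, j} : Finset (Fin n)) → f l * w l = 0 := by
      intro l _ hl
      have h1 : l ≠ i := fun h => hl (by rw [h]; exact Finset.mem_insert_self _ _)
      have h2 : l ≠ j := fun h => hl (by rw [h]; exact Finset.mem_insert_of_mem (Finset.mem_singleton_self _))
      simp [hwdef, h1, h2]
    rw [← Finset.sum_subset (Finset.subset_univ ({i, j} : Finset (Fin n))) hzero,
      Finset.sum_pair hij]
    have hwi : w i = a := by simp [hwdef]
    have hwj : w j = b := by simp [hwdef, Ne.symm hij]
    rw [hwi, hwj]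
  have hwi : w i = a := by simp [hwdef]
  have hwj : w j = b := by simp [hwdef, Ne.symm hij]
  have hxx : x ⬝ᵥ x = a ^ 2 + b ^ 2 := by
    rw [aux_dot_conj hW1 x x, hWx, dotProduct, hsum w, hwi, hwj]
    ring
  have hxB : x ⬝ᵥ (B *ᵥ x) = β i * a ^ 2 + β j * b ^ 2 := by
    rw [aux_quad_form hW1 hWspec x]
    have h1 : ∀ l ∈ Finset.univ, β l * ((Wᵀ *ᵥ x) l) ^ 2 = (fun l2 => β l2 * w l2) l * w l := by
      intro l _; rw [hWx]; ring
    rw [Finset.sum_congr rfl h1, hsum (fun l2 => β l2 * w l2), hwi, hwj]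
    ring
  have h1x : (fun _ : Fin n => (1:ℝ)) ⬝ᵥ x = 0 := by
    rw [aux_dot_conj hW1, hWx, ← hqdef, dotProduct, hsum q]
    linear_combination hab0
  -- final chain
  have c1 : m * (a ^ 2 + b ^ 2) ≤ β i * a ^ 2 + β j * b ^ 2 := by
    nlinarith [sq_nonneg a, sq_nonneg b]
  have c2 := hmatch x
  have c3 := hABdd x h1x
  have c5 : L * (x ⬝ᵥ x) = L * (a ^ 2 + b ^ 2) := by rw [hxx]
  have c6 : (L + 1) * (a ^ 2 + b ^ 2) = L * (a ^ 2 + b ^ 2) + (a ^ 2 + b ^ 2) := by ring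
  have hchain : m * (a ^ 2 + b ^ 2) ≤ (L + 1) * (a ^ 2 + b ^ 2) := by
    linarith [c1, c2, c3, c5, hxB, hxx, c6]
  have hm1 : m ≤ L + 1 := (mul_le_mul_iff_left₀ habpos).mp hchain
  calc m ≤ L + 1 := hm1
  _ ≤ 1 + 2 * Real.sqrt ((k:ℝ) - 1) := by linarith [hgap]
end
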